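/- arXiv:2602.21907 — 4 statements merged into one kernel-verified Lean document; each statement's English description precedes it below -/
import Mathlib

section
/- Let e ≥ 1, n_1,…,n_e ≥ 2, N = (∑ n_i) - (e-1). The k-skeleton Δ(n_1,…,n_e)_{(k)} has f-vector (1, N, ∑_{i=1}^e C(n_i,2), …, ∑_{i=1}^e C(n_i, s+1)), where s = min{k, max n_i - 1}. -/
/-- Let `e ≥ 1`, `n_1,…,n_e ≥ 2`, `N = (∑ n_i) - (e-1)`, and let `Δ(n_1,…,n_e)` have
facets `S_0,…,S_{e-1}` with `|S_i| = n_i` and `(S_0 ∪ ⋯ ∪ S_i) ∩ S_{i+1}` a single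
point for each `i < e-1`. Let `s = min{k, max n_i - 1}`. Then the `k`-skeleton (faces of
cardinality at most `k+1`) has `f`-vector `(1, N, ∑ C(n_i,2), …, ∑ C(n_i, s+1))`:
it has `N` vertices, and for `2 ≤ j ≤ s+1` it has `∑_i C(n_i, j)` faces of
cardinality `j`. -/
theorem stmt_8 {V : Type*} [DecidableEq V] (e : ℕ) (he : 1 ≤ e)
    (n : ℕ → ℕ) (hn : ∀ i < e, 2 ≤ n i)
    (S : ℕ → Finset V) (hcard : ∀ i < e, (S i).card = n i)
    (hglue : ∀ i, i + 1 < e → ∃ p : V, ((Finset.range (i + 1)).biUnion S) ∩ S (i + 1) = {p})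
    (k : ℕ) (hk : 1 ≤ k) :
    let skel : Finset (Finset V) :=
      (((Finset.range e).biUnion (fun i => (S i).powerset)).filter (fun σ => σ.card ≤ k + 1))
    (skel.filter (fun σ => σ.card = 1)).card = (∑ i ∈ Finset.range e, n i) - (e - 1) ∧
      ∀ j, 2 ≤ j → j ≤ min k ((Finset.range e).sup n - 1) + 1 →
        (skel.filter (fun σ => σ.card = j)).card = ∑ i ∈ Finset.range e, (n i).choose j := by
  intro skel
  -- intersections of distinct facets have at most one element
  have hint : ∀ a b, a < b → b < e → (S a ∩ S b).card ≤ 1 := by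
    intro a b hab hbe
    obtain ⟨p, hp⟩ := hglue (b - 1) (by omega)
    rw [show b - 1 + 1 = b by omega] at hp
    have hsub : S a ∩ S b ⊆ (Finset.range b).biUnion S ∩ S b := by
      refine Finset.inter_subset_inter ?_ le_rfl
      intro x hx
      exact Finset.mem_biUnion.2 ⟨a, Finset.mem_range.2 hab, hx⟩
    calc (S a ∩ S b).card ≤ (({p} : Finset V)).card :=
          Finset.card_le_card (hp ▸ hsub)
      _ = 1 := Finset.card_singleton p
  -- cardinality of the union of the first m facets
  have hA : ∀ m, 1 ≤ m → m ≤ e →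
      ((Finset.range m).biUnion S).card + (m - 1) = ∑ i ∈ Finset.range m, n i := by
    intro m
    induction m with
    | zero => omega
    | succ m ih =>
      intro _ hme
      by_cases hm : m = 0
      · subst hm
        simp [Finset.range_one, Finset.singleton_biUnion, hcard 0 (by omega)]
      · have ihm := ih (by omega) (by omega)
        obtain ⟨p, hp⟩ := hglue (m - 1) (by omega)
        rw [show m - 1 + 1 = m by omega] at hp
        have hun : (Finset.range (m + 1)).biUnion S = (Finset.range m).biUnion S ∪ S m := by
          rw [Finset.range_add_one, Finset.biUnion_insert]; exact Finset.union_comm _ _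
        have hcu := Finset.card_union_add_card_inter ((Finset.range m).biUnion S) (S m)
        rw [hp, Finset.card_singleton] at hcu
        have hsm := hcard m (by omega)
        rw [hun, Finset.sum_range_succ]
        omega
  constructor
  · -- vertices
    have himg : skel.filter (fun σ => σ.card = 1)
        = ((Finset.range e).biUnion S).image (fun v => ({v} : Finset V)) := by
      ext σ
      simp only [skel, Finset.mem_filter, Finset.mem_biUnion, Finset.mem_powerset,
        Finset.mem_image, Finset.mem_range, Finset.card_eq_one]
      constructor
      · rintro ⟨⟨⟨i, hie, hσ⟩, -⟩, v, rfl⟩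
        exact ⟨v, ⟨i, hie, hσ (Finset.mem_singleton_self v)⟩, rfl⟩
      · rintro ⟨v, ⟨i, hie, hv⟩, rfl⟩
        exact ⟨⟨⟨i, hie, Finset.singleton_subset_iff.2 hv⟩, by rw [Finset.card_singleton]; omega⟩, v, rfl⟩
    rw [himg, Finset.card_image_of_injective _ Finset.singleton_injective]
    have := hA e he le_rfl
    omega
  · intro j hj2 hjle
    have hjk : j ≤ k + 1 := by omega
    have heq : skel.filter (fun σ => σ.card = j)
        = (Finset.range e).biUnion (fun i => (S i).powersetCard j) := by
      ext σ
      simp only [skel, Finset.mem_filter, Finset.mem_biUnion, Finset.mem_powerset,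
        Finset.mem_range, Finset.mem_powersetCard]
      constructor
      · rintro ⟨⟨⟨i, hie, hσ⟩, -⟩, hc⟩
        exact ⟨i, hie, hσ, hc⟩
      · rintro ⟨i, hie, hσ, hc⟩
        exact ⟨⟨⟨i, hie, hσ⟩, by omega⟩, hc⟩
    rw [heq, Finset.card_biUnion]
    · refine Finset.sum_congr rfl fun i hi => ?_
      rw [Finset.card_powersetCard, hcard i (Finset.mem_range.1 hi)]
    · intro a ha b hb hab
      show Disjoint (Finset.powersetCard j (S a)) (Finset.powersetCard j (S b))
      rw [Finset.disjoint_left]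
      intro σ hσa hσb
      rw [Finset.mem_powersetCard] at hσa hσb
      have hsub : σ ⊆ S a ∩ S b := Finset.subset_inter hσa.1 hσb.1
      have hcle : σ.card ≤ (S a ∩ S b).card := Finset.card_le_card hsub
      have hone : (S a ∩ S b).card ≤ 1 := by
        rcases lt_or_gt_of_ne hab with h | h
        · exact hint a b h (Finset.mem_range.1 hb)
        · rw [Finset.inter_comm]; exact hint b a h (Finset.mem_range.1 ha)
      omega
end

section
/- Let n ≥ 2, e ≥ 1, N = e*n - (e-1). Then for every i ≥ 1, the quantity -e*C(N-n, i+1) + (e-1)*C(N-1, i+1) is nonnegative, and it is positive for 1 ≤ i ≤ N-2 when e ≥ 2. -/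
lemma id1 (x k : ℕ) (hx : 1 ≤ x) (hk : 1 ≤ k) :
    k * x.choose k = x * (x-1).choose (k-1) := by
  obtain ⟨x', rfl⟩ : ∃ x', x = x' + 1 := ⟨x - 1, by omega⟩
  obtain ⟨k', rfl⟩ : ∃ k', k = k' + 1 := ⟨k - 1, by omega⟩
  simp only [Nat.add_sub_cancel]
  simpa [mul_comm] using (Nat.add_one_mul_choose_eq x' k').symm

lemma aux1 (a b k : ℕ) (hab : a ≤ b) (hk : 1 ≤ k) :
    b * a.choose k ≤ a * b.choose k := by
  rcases Nat.eq_zero_or_pos a with ha | ha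
  · subst ha; simp [Nat.choose_eq_zero_of_lt hk]
  · have hb : 0 < b := lt_of_lt_of_le ha hab
    have key : k * (b * a.choose k) ≤ k * (a * b.choose k) := by
      calc k * (b * a.choose k) = b * (k * a.choose k) := by ring
        _ = b * (a * (a-1).choose (k-1)) := by rw [id1 a k ha hk]
        _ = (a * b) * (a-1).choose (k-1) := by ring
        _ ≤ (a * b) * (b-1).choose (k-1) := by
            exact Nat.mul_le_mul_left _ (Nat.choose_le_choose _ (by omega))
        _ = a * (b * (b-1).choose (k-1)) := by ring
        _ = a * (k * b.choose k) := by rw [id1 b k hb hk]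
        _ = k * (a * b.choose k) := by ring
    exact Nat.le_of_mul_le_mul_left key (by omega)

lemma aux_sq (a b k : ℕ) (hab : a ≤ b) (hk : 2 ≤ k) :
    b * (b-1) * a.choose k ≤ a * (a-1) * b.choose k := by
  rcases Nat.lt_or_ge a 2 with ha | ha
  · have : a.choose k = 0 := Nat.choose_eq_zero_of_lt (by omega)
    simp [this]
  · have hb : 2 ≤ b := le_trans ha hab
    have key : k * (b * (b-1) * a.choose k) ≤ k * (a * (a-1) * b.choose k) := by
      calc k * (b * (b-1) * a.choose k) = b * (b-1) * (k * a.choose k) := by ring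
        _ = b * (b-1) * (a * (a-1).choose (k-1)) := by rw [id1 a k (by omega) (by omega)]
        _ = (a * b) * ((b-1) * (a-1).choose (k-1)) := by ring
        _ ≤ (a * b) * ((a-1) * (b-1).choose (k-1)) := by
            exact Nat.mul_le_mul_left _ (aux1 (a-1) (b-1) (k-1) (by omega) (by omega))
        _ = a * (a-1) * ((b) * (b-1).choose (k-1)) := by ring
        _ = a * (a-1) * (k * b.choose k) := by rw [id1 b k (by omega) (by omega)]
        _ = k * (a * (a-1) * b.choose k) := by ring
    exact Nat.le_of_mul_le_mul_left key (by omega)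

lemma aux2 (m e k : ℕ) (hm : 1 ≤ m) (he : 2 ≤ e) (hk : 2 ≤ k) (hke : k ≤ e * m) :
    e * ((e-1)*m).choose k < (e-1) * ((e*m).choose k) := by
  set a := (e-1)*m with ha
  set b := e*m with hb
  have hab : a < b := by
    have : (e-1)*m < e*m := (Nat.mul_lt_mul_right (show 0 < m by omega)).mpr (by omega)
    omega
  rcases Nat.lt_or_ge a k with hak | hak
  · have h0 : a.choose k = 0 := Nat.choose_eq_zero_of_lt hak
    have h1 : 0 < b.choose k := Nat.choose_pos hke
    rw [h0, Nat.mul_zero]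
    exact Nat.mul_pos (by omega) h1
  · have ha2 : 2 ≤ a := le_trans hk hak
    have hCa : 0 < a.choose k := Nat.choose_pos hak
    have hsq : b * (b-1) * a.choose k ≤ a * (a-1) * b.choose k := aux_sq a b k (by omega) hk
    have hsq2 : e * (b-1) * a.choose k ≤ (e-1) * (a-1) * b.choose k := by
      have h1 : m * (e * (b-1) * a.choose k) ≤ m * ((e-1) * (a-1) * b.choose k) := by
        calc m * (e * (b-1) * a.choose k) = b * (b-1) * a.choose k := by rw [hb]; ring
          _ ≤ a * (a-1) * b.choose k := hsq
          _ = m * ((e-1) * (a-1) * b.choose k) := by rw [ha]; ring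
      exact Nat.le_of_mul_le_mul_left h1 (by omega)
    have hba : b = a + m := by
      rw [ha, hb]
      cases e with
      | zero => omega
      | succ e' => simp [Nat.succ_sub_one]; ring
    have key : (a-1) * (e * a.choose k) < (a-1) * ((e-1) * b.choose k) := by
      have expand : e * (b-1) * a.choose k = (a-1) * (e * a.choose k) + e * m * a.choose k := by
        have : b - 1 = (a - 1) + m := by omega
        rw [this]; ring
      have hpos : 0 < e * m * a.choose k :=
        Nat.mul_pos (Nat.mul_pos (by omega) (by omega)) hCa
      calc (a-1) * (e * a.choose k) < e * (b-1) * a.choose k := by omega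
        _ ≤ (e-1) * (a-1) * b.choose k := hsq2
        _ = (a-1) * ((e-1) * b.choose k) := by ring
    exact Nat.lt_of_mul_lt_mul_left key

/-- For `n ≥ 2`, `e ≥ 1`, `N = e*n - (e-1)`, and every `i ≥ 1`, the quantity
`-e*C(N-n, i+1) + (e-1)*C(N-1, i+1)` is nonnegative, and it is positive for
`1 ≤ i ≤ N-2` when `e ≥ 2`. -/
theorem stmt_9 (n e N : ℕ) (hn : 2 ≤ n) (he : 1 ≤ e) (hN : N = e * n - (e - 1)) :
    ∀ i : ℕ, 1 ≤ i →
      (0 ≤ -(e : ℤ) * ((N - n).choose (i + 1) : ℤ) + ((e : ℤ) - 1) * ((N - 1).choose (i + 1) : ℤ)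
      ∧ (2 ≤ e → i ≤ N - 2 →
          0 < -(e : ℤ) * ((N - n).choose (i + 1) : ℤ)
              + ((e : ℤ) - 1) * ((N - 1).choose (i + 1) : ℤ))) := by
  intro i hi
  obtain ⟨n', rfl⟩ : ∃ n', n = n' + 1 := ⟨n - 1, by omega⟩
  have hn' : 1 ≤ n' := by omega
  obtain ⟨e1, rfl⟩ : ∃ e1, e = e1 + 1 := ⟨e - 1, by omega⟩
  have hq : (e1 + 1) * (n' + 1) = (e1 + 1) * n' + e1 + 1 := by ring
  set q := (e1 + 1) * n' with hqdef
  have hqpos : 1 ≤ q := by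
    have := Nat.mul_pos (show 0 < e1 + 1 by omega) (show 0 < n' by omega)
    omega
  have hNval : N = q + 1 := by omega
  have hN1 : N - 1 = q := by omega
  have hNn : N - (n' + 1) = e1 * n' := by
    have : e1 * n' + n' = q := by rw [hqdef]; ring
    omega
  set k := i + 1 with hkdef
  have hk2 : 2 ≤ k := by omega
  -- nonnegativity
  have hmain : (e1 + 1) * ((e1 * n').choose k) ≤ e1 * (q.choose k) := by
    have h1 : e1 * n' ≤ q := by omega
    have h2 := aux1 (e1 * n') q k h1 (by omega)
    -- q * C(e1 n', k) ≤ e1 n' * C(q, k)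
    have h3 : n' * ((e1 + 1) * ((e1 * n').choose k)) ≤ n' * (e1 * (q.choose k)) := by
      calc n' * ((e1 + 1) * ((e1 * n').choose k)) = q * ((e1 * n').choose k) := by
            rw [hqdef]; ring
        _ ≤ (e1 * n') * (q.choose k) := h2
        _ = n' * (e1 * (q.choose k)) := by ring
    exact Nat.le_of_mul_le_mul_left h3 (by omega)
  constructor
  · rw [hN1, hNn]
    have h' : ((e1 : ℤ) + 1) * (((e1 * n').choose k : ℕ) : ℤ) ≤ (e1 : ℤ) * ((q.choose k : ℕ) : ℤ) := by
      exact_mod_cast hmain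
    push_cast
    linarith
  · intro he2 hiN
    have hke : k ≤ (e1 + 1) * n' := by omega
    have h2 := aux2 n' (e1 + 1) k hn' he2 hk2 hke
    simp only [Nat.add_sub_cancel] at h2
    -- h2 : (e1+1) * (e1*n').choose k < e1 * ((e1+1)*n').choose k
    rw [hN1, hNn]
    have h' : ((e1 : ℤ) + 1) * (((e1 * n').choose k : ℕ) : ℤ) < (e1 : ℤ) * ((q.choose k : ℕ) : ℤ) := by
      exact_mod_cast h2
    push_cast
    linarith
end

section
/- Let n_1,…,n_e ≥ 2, 1 ≤ k < max n_s - 1, and i ≥ 1, with N = (∑ n_s) - (e-1). Then the integer ∑_{j=k+2}^{max n_s} ∑_{s=1}^e C(n_s, j) * (-1)^{k-j} * C(N-j, k+i+1-j) is nonnegative whenever k+i+1 ≤ N, where C(a,b)=0 if b<0 or b>a. -/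
/-- Binomial coefficient `C(a,b)` for an integer lower index `b`, with the convention
that it is `0` when `b < 0` (and automatically `0` when `b > a`). -/
def chooseZ (a : ℕ) (b : ℤ) : ℤ := if 0 ≤ b then (a.choose b.toNat : ℤ) else 0

namespace Stmt12Aux

open Finset

/-- The tail alternating sum `∑_{j=t}^{n} (-1)^(j-t) C(n,j) C(N-j,r)`. -/
def F (n N r t : ℕ) : ℤ :=
  ∑ j ∈ Finset.Icc t n, (-1) ^ (j - t) * (n.choose j : ℤ) * ((N - j).choose r : ℤ)

lemma F_triv (n N N' t : ℕ) : F n N 0 t = F n N' 0 t := by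
  simp [F]

lemma F_pascal (n N r t : ℕ) (hnN : n < N) :
    F n N (r + 1) t = F n (N - 1) (r + 1) t + F n (N - 1) r t := by
  unfold F
  rw [← Finset.sum_add_distrib]
  refine Finset.sum_congr rfl fun j hj => ?_
  simp only [Finset.mem_Icc] at hj
  have h1 : N - j = (N - 1 - j) + 1 := by omega
  rw [h1, Nat.choose_succ_succ]
  push_cast
  ring

lemma F_split (n N r t : ℕ) (ht : 1 ≤ t) :
    F (n + 1) N r t =
      (n.choose (t - 1) : ℤ) * ((N - t).choose r : ℤ) + F n N r t - F n (N - 1) r t := by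
  by_cases hcase : t ≤ n + 1
  · have step1 : ∑ j ∈ Finset.Icc t (n + 1),
          (-1 : ℤ) ^ (j - t) * ((n + 1).choose j : ℤ) * ((N - j).choose r : ℤ)
        = ∑ j ∈ Finset.Icc t (n + 1),
          ((-1 : ℤ) ^ (j - t) * (n.choose (j - 1) : ℤ) * ((N - j).choose r : ℤ)
            + (-1 : ℤ) ^ (j - t) * (n.choose j : ℤ) * ((N - j).choose r : ℤ)) := by
      refine Finset.sum_congr rfl fun j hj => ?_
      simp only [Finset.mem_Icc] at hj
      obtain ⟨j', rfl⟩ : ∃ j', j = j' + 1 := ⟨j - 1, by omega⟩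
      have hch : (((n + 1).choose (j' + 1) : ℕ) : ℤ)
          = (n.choose j' : ℤ) + (n.choose (j' + 1) : ℤ) := by
        rw [Nat.choose_succ_succ]; push_cast; ring
      have hsub : j' + 1 - 1 = j' := by omega
      rw [hch, hsub]
      ring
    have hS2 : ∑ j ∈ Finset.Icc t (n + 1),
          (-1 : ℤ) ^ (j - t) * (n.choose j : ℤ) * ((N - j).choose r : ℤ) = F n N r t := by
      rw [Finset.sum_Icc_succ_top hcase]
      have : n.choose (n + 1) = 0 := Nat.choose_eq_zero_of_lt (by omega)
      simp [F, this]
    have hmap : Finset.Icc t (n + 1) = (Finset.Icc (t - 1) n).map (addLeftEmbedding 1) := by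
      rw [Finset.map_add_left_Icc]
      congr 1 <;> omega
    have hS1 : ∑ j ∈ Finset.Icc t (n + 1),
          (-1 : ℤ) ^ (j - t) * (n.choose (j - 1) : ℤ) * ((N - j).choose r : ℤ)
        = (n.choose (t - 1) : ℤ) * ((N - t).choose r : ℤ) - F n (N - 1) r t := by
      rw [hmap, Finset.sum_map]
      simp only [addLeftEmbedding_apply]
      rw [Finset.Icc_eq_cons_Ioc (by omega : t - 1 ≤ n), Finset.sum_cons]
      have hIoc : Finset.Ioc (t - 1) n = Finset.Icc t n := by
        rw [← Finset.Icc_add_one_left_eq_Ioc]; congr 1; omega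
      have hbot : (-1 : ℤ) ^ (1 + (t - 1) - t) * (n.choose (1 + (t - 1) - 1) : ℤ) *
            ((N - (1 + (t - 1))).choose r : ℤ)
          = (n.choose (t - 1) : ℤ) * ((N - t).choose r : ℤ) := by
        have e1 : 1 + (t - 1) - t = 0 := by omega
        have e2 : 1 + (t - 1) - 1 = t - 1 := by omega
        have e3 : 1 + (t - 1) = t := by omega
        rw [e1, e2, e3]; ring
      rw [hbot, hIoc]
      have hrest : ∑ j ∈ Finset.Icc t n,
            (-1 : ℤ) ^ (1 + j - t) * (n.choose (1 + j - 1) : ℤ) * ((N - (1 + j)).choose r : ℤ)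
          = - F n (N - 1) r t := by
        unfold F
        rw [← Finset.sum_neg_distrib]
        refine Finset.sum_congr rfl fun j hj => ?_
        simp only [Finset.mem_Icc] at hj
        have e1 : 1 + j - t = (j - t) + 1 := by omega
        have e2 : 1 + j - 1 = j := by omega
        have e3 : N - (1 + j) = N - 1 - j := by omega
        rw [e1, e2, e3, pow_succ]
        ring
      rw [hrest]
      ring
    rw [show F (n + 1) N r t = ∑ j ∈ Finset.Icc t (n + 1),
        (-1 : ℤ) ^ (j - t) * ((n + 1).choose j : ℤ) * ((N - j).choose r : ℤ) from rfl,
      step1, Finset.sum_add_distrib, hS1, hS2]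
    ring
  · have h1 : Finset.Icc t (n + 1) = ∅ := Finset.Icc_eq_empty (by omega)
    have h2 : Finset.Icc t n = ∅ := Finset.Icc_eq_empty (by omega)
    have h3 : n.choose (t - 1) = 0 := Nat.choose_eq_zero_of_lt (by omega)
    simp [F, h1, h2, h3]

lemma F_nonneg (n N r t : ℕ) (ht : 1 ≤ t) (hnN : n ≤ N) : 0 ≤ F n N r t := by
  induction n generalizing N r with
  | zero =>
    have : Finset.Icc t 0 = ∅ := Finset.Icc_eq_empty (by omega)
    simp [F, this]
  | succ n ih =>
    have hsplit := F_split n N r t ht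
    cases r with
    | zero =>
      rw [hsplit, F_triv n N (N - 1) t]
      have : (0 : ℤ) ≤ (n.choose (t - 1) : ℤ) * (((N - t).choose 0 : ℕ) : ℤ) := by positivity
      omega
    | succ r =>
      rw [hsplit, F_pascal n N r t (by omega)]
      have h1 : (0 : ℤ) ≤ (n.choose (t - 1) : ℤ) * (((N - t).choose (r + 1) : ℕ) : ℤ) := by
        positivity
      have h2 := ih (N - 1) r (by omega)
      omega

end Stmt12Aux

/-- Let `n_1,…,n_e ≥ 2`, `N = ∑ n_s - (e-1)`, `1 ≤ k < max n_s - 1`, and `i ≥ 1` with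
`k+i+1 ≤ N`. Then `∑_{j=k+2}^{max n_s} ∑_s C(n_s,j) (-1)^(k-j) C(N-j, k+i+1-j) ≥ 0`,
with the convention `C(a,b) = 0` for `b < 0` or `b > a`. -/
theorem stmt_12 (e : ℕ) (n : Fin e → ℕ) (hn : ∀ s, 2 ≤ n s)
    (N : ℕ) (hN : N = (∑ s, n s) - (e - 1))
    (M : ℕ) (hM : M = Finset.univ.sup n)
    (k i : ℕ) (hk1 : 1 ≤ k) (hk2 : k < M - 1) (hi : 1 ≤ i) (hkiN : k + i + 1 ≤ N) :
    (0 : ℚ) ≤ ∑ j ∈ Finset.Icc (k + 2) M, ∑ s, ((n s).choose j : ℚ) *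
      (-1 : ℚ) ^ ((k : ℤ) - j) * (chooseZ (N - j) ((k : ℤ) + i + 1 - j) : ℚ) := by
  classical
  set m : ℕ := k + i + 1 with hm
  -- e is positive
  have he : 0 < e := by
    rcases Nat.eq_zero_or_pos e with h | h
    · subst h
      have : M = 0 := by simp [hM]
      omega
    · exact h
  have : Nonempty (Fin e) := ⟨⟨0, he⟩⟩
  -- M ≤ N
  have hMN : M ≤ N := by
    obtain ⟨s₀, -, hs₀⟩ := Finset.exists_mem_eq_sup Finset.univ Finset.univ_nonempty n
    have hsum : n s₀ + ∑ s ∈ Finset.univ.erase s₀, n s = ∑ s, n s :=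
      Finset.add_sum_erase _ _ (Finset.mem_univ s₀)
    have hcard : (Finset.univ.erase s₀).card = e - 1 := by
      rw [Finset.card_erase_of_mem (Finset.mem_univ s₀)]
      simp
    have hM' : M = n s₀ := by rw [hM, hs₀]
    have hge : (Finset.univ.erase s₀).card • 1 ≤ ∑ s ∈ Finset.univ.erase s₀, n s :=
      Finset.card_nsmul_le_sum _ _ _ (fun s _ => by have := hn s; omega)
    simp only [smul_eq_mul, mul_one] at hge
    omega
  rw [Finset.sum_comm]
  refine Finset.sum_nonneg fun s _ => ?_
  have hns : n s ≤ M := hM ▸ Finset.le_sup (Finset.mem_univ s)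
  have key : ∑ j ∈ Finset.Icc (k + 2) M, ((n s).choose j : ℚ) *
        (-1 : ℚ) ^ ((k : ℤ) - j) * (chooseZ (N - j) ((k : ℤ) + i + 1 - j) : ℚ)
      = ((Stmt12Aux.F (n s) N (N - m) (k + 2) : ℤ) : ℚ) := by
    rw [← Finset.sum_subset (Finset.Icc_subset_Icc_right hns)
        (fun x hx hx' => by
          simp only [Finset.mem_Icc] at hx hx'
          have : (n s).choose x = 0 := Nat.choose_eq_zero_of_lt (by omega)
          simp [this])]
    unfold Stmt12Aux.F
    push_cast
    refine Finset.sum_congr rfl fun j hj => ?_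
    simp only [Finset.mem_Icc] at hj
    obtain ⟨hj1, hj2⟩ := hj
    have hjN : j ≤ N := by omega
    by_cases hjm : j ≤ m
    · -- chooseZ is a genuine binomial coefficient here
      have hpos : (0 : ℤ) ≤ (k : ℤ) + i + 1 - j := by omega
      have htn : ((k : ℤ) + i + 1 - j).toNat = m - j := by omega
      rw [chooseZ, if_pos hpos, htn]
      have hsym : (N - j).choose (m - j) = (N - j).choose (N - m) := by
        have h1 : N - m ≤ N - j := by omega
        have h2 : (N - j) - (N - m) = m - j := by omega
        rw [← h2, Nat.choose_symm h1]
      rw [hsym]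
      -- the sign
      obtain ⟨d, rfl⟩ : ∃ d, j = k + 2 + d := ⟨j - (k + 2), by omega⟩
      have hexp : (k : ℤ) - (k + 2 + d : ℕ) = -(((d : ℕ) : ℤ) + 2) := by push_cast; ring
      have hd : (k + 2 + d) - (k + 2) = d := by omega
      rw [hexp, hd]
      have hsign : (-1 : ℚ) ^ (-(((d : ℕ) : ℤ) + 2)) = (-1 : ℚ) ^ d := by
        rw [show (((d : ℕ) : ℤ) + 2) = ((d + 2 : ℕ) : ℤ) by push_cast; ring,
          zpow_neg, zpow_natCast]
        have h2 : (-1 : ℚ) ^ (d + 2) = (-1 : ℚ) ^ d := by rw [pow_add]; norm_num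
        rw [h2]
        rcases Nat.even_or_odd d with hpar | hpar <;> rw [hpar.neg_one_pow] <;> norm_num
      rw [hsign]
      push_cast
      ring
    · -- both sides vanish
      have hneg : ¬ (0 : ℤ) ≤ (k : ℤ) + i + 1 - j := by omega
      rw [chooseZ, if_neg hneg]
      have : (N - j).choose (N - m) = 0 := Nat.choose_eq_zero_of_lt (by omega)
      simp [this]
  rw [key]
  exact_mod_cast Stmt12Aux.F_nonneg (n s) N (N - m) (k + 2) (by omega) (by omega)
end

section
/- Let n ≥ 3, e ≥ 1, k ≥ 2 with k < n - 1, and N = e*n - (e-1). Then the minimal monomial generators of the Stanley-Reisner ideal I of the k-skeleton Δ(n,e)_{(k)} occur exactly in degrees 2 and k+2: the degree-2 generators are the products x_i x_j over pairs of vertices not lying in a common facet, and the degree-(k+2) generators are the squarefree monomials x_{i_1}⋯x_{i_{k+2}} with all vertices in one facet. -/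
/-- Let `n ≥ 3`, `e ≥ 1`, `2 ≤ k < n - 1`, and let `Δ(n,e)` have facets `S_0,…,S_{e-1}`,
each with `n` vertices, glued successively along single points. The faces of the
`k`-skeleton `Δ(n,e)_(k)` are the subsets of facets of cardinality at most `k+1`. Then
the minimal non-faces (equivalently, the minimal monomial generators of the
Stanley–Reisner ideal) occur exactly in cardinalities (degrees) `2` and `k+2`: a subset
`σ` of the vertex set is a minimal non-face if and only if either `σ` has two elements
not lying in a common facet, or `σ` has `k+2` elements all lying in one facet. -/
theorem stmt_15 {V : Type*} [DecidableEq V] (n e k : ℕ)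
    (hn : 3 ≤ n) (he : 1 ≤ e) (hk2 : 2 ≤ k) (hkn : k < n - 1)
    (S : ℕ → Finset V) (hcard : ∀ i < e, (S i).card = n)
    (hglue : ∀ i, i + 1 < e → ∃ p : V, ((Finset.range (i + 1)).biUnion S) ∩ S (i + 1) = {p}) :
    ∀ σ : Finset V, σ ⊆ (Finset.range e).biUnion S →
      (((¬ (σ.card ≤ k + 1 ∧ ∃ i < e, σ ⊆ S i)) ∧
          ∀ τ ⊂ σ, τ.card ≤ k + 1 ∧ ∃ i < e, τ ⊆ S i) ↔
        ((σ.card = 2 ∧ ¬ ∃ i < e, σ ⊆ S i) ∨ (σ.card = k + 2 ∧ ∃ i < e, σ ⊆ S i))) := by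
  -- Key lemma: two facets with a larger common index intersect in at most one point.
  have key : ∀ j, j < e → ∀ i, i < j → ∀ i', i' < j → ∀ x y : V,
      x ∈ S i → x ∈ S j → y ∈ S i' → y ∈ S j → x = y := by
    intro j hj i hi i' hi' x y hxi hxj hyi hyj
    obtain ⟨p, hp⟩ := hglue (j - 1) (by omega)
    have hj1 : j - 1 + 1 = j := by omega
    rw [hj1] at hp
    have hx : x ∈ ((Finset.range j).biUnion S) ∩ S j := by
      simp only [Finset.mem_inter, Finset.mem_biUnion, Finset.mem_range]
      exact ⟨⟨i, hi, hxi⟩, hxj⟩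
    have hy : y ∈ ((Finset.range j).biUnion S) ∩ S j := by
      simp only [Finset.mem_inter, Finset.mem_biUnion, Finset.mem_range]
      exact ⟨⟨i', hi', hyi⟩, hyj⟩
    rw [hp, Finset.mem_singleton] at hx hy
    rw [hx, hy]
  -- small sets are faces
  have small : ∀ τ : Finset V, τ ⊆ (Finset.range e).biUnion S → τ.card ≤ 1 →
      ∃ i < e, τ ⊆ S i := by
    intro τ hτb hτ1
    rcases Finset.eq_empty_or_nonempty τ with rfl | ⟨v, hv⟩
    · exact ⟨0, by omega, by simp⟩
    · have hvb := hτb hv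
      simp only [Finset.mem_biUnion, Finset.mem_range] at hvb
      obtain ⟨i, hi, hvi⟩ := hvb
      refine ⟨i, hi, fun x hx => ?_⟩
      have : x = v := Finset.card_le_one.1 hτ1 x hx v hv
      rwa [this]
  intro σ hσ
  constructor
  · rintro ⟨hnf, hmin⟩
    by_cases hfac : ∃ i < e, σ ⊆ S i
    · right
      obtain ⟨i, hi, hsub⟩ := hfac
      have hc2 : k + 2 ≤ σ.card := by
        by_contra h
        exact hnf ⟨by omega, i, hi, hsub⟩
      refine ⟨le_antisymm ?_ hc2, i, hi, hsub⟩
      by_contra h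
      push_neg at h
      obtain ⟨τ, hτs, hτc⟩ := Finset.exists_subset_card_eq (s := σ) (n := k + 2) hc2
      have hne : τ ≠ σ := by
        intro h'
        rw [h'] at hτc
        omega
      have := (hmin τ (hτs.ssubset_of_ne hne)).1
      omega
    · left
      have h2 : 2 ≤ σ.card := by
        by_contra h
        push_neg at h
        exact hnf ⟨by omega, small σ hσ (by omega)⟩
      refine ⟨le_antisymm ?_ h2, hfac⟩
      by_contra h3
      push_neg at h3
      -- extract three distinct elements a b c
      obtain ⟨a, ha⟩ := Finset.card_pos.1 (by omega : 0 < σ.card)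
      have hca : 0 < (σ.erase a).card := by
        rw [Finset.card_erase_of_mem ha]; omega
      obtain ⟨b, hb'⟩ := Finset.card_pos.1 hca
      have hb : b ∈ σ := Finset.mem_of_mem_erase hb'
      have hba : b ≠ a := Finset.ne_of_mem_erase hb'
      have hcb : 0 < ((σ.erase a).erase b).card := by
        rw [Finset.card_erase_of_mem hb', Finset.card_erase_of_mem ha]; omega
      obtain ⟨c, hc'⟩ := Finset.card_pos.1 hcb
      have hc : c ∈ σ := Finset.mem_of_mem_erase (Finset.mem_of_mem_erase hc')
      have hcb' : c ≠ b := Finset.ne_of_mem_erase hc'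
      have hca' : c ≠ a := Finset.ne_of_mem_erase (Finset.mem_of_mem_erase hc')
      -- for each of a,b,c, get a facet containing its complement
      have getF : ∀ x ∈ σ, ∃ i < e, σ.erase x ⊆ S i ∧ x ∉ S i := by
        intro x hx
        obtain ⟨_, i, hie, hsub⟩ := hmin (σ.erase x) (Finset.erase_ssubset hx)
        refine ⟨i, hie, hsub, fun hxS => hfac ⟨i, hie, fun y hy => ?_⟩⟩
        by_cases hyx : y = x
        · rwa [hyx]
        · exact hsub (Finset.mem_erase.2 ⟨hyx, hy⟩)
      obtain ⟨i, hie, hi1, hi2⟩ := getF a ha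
      obtain ⟨j, hje, hj1, hj2⟩ := getF b hb
      obtain ⟨l, hle, hl1, hl2⟩ := getF c hc
      have hbSi : b ∈ S i := hi1 (Finset.mem_erase.2 ⟨hba, hb⟩)
      have hcSi : c ∈ S i := hi1 (Finset.mem_erase.2 ⟨hca', hc⟩)
      have haSj : a ∈ S j := hj1 (Finset.mem_erase.2 ⟨Ne.symm hba, ha⟩)
      have hcSj : c ∈ S j := hj1 (Finset.mem_erase.2 ⟨hcb', hc⟩)
      have haSl : a ∈ S l := hl1 (Finset.mem_erase.2 ⟨Ne.symm hca', ha⟩)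
      have hbSl : b ∈ S l := hl1 (Finset.mem_erase.2 ⟨Ne.symm hcb', hb⟩)
      have hij : i ≠ j := fun h => hj2 (h ▸ hbSi)
      have hil : i ≠ l := fun h => hl2 (h ▸ hcSi)
      have hjl : j ≠ l := fun h => hl2 (h ▸ hcSj)
      have htri : (j < i ∧ l < i) ∨ (i < j ∧ l < j) ∨ (i < l ∧ j < l) := by omega
      rcases htri with ⟨h1, h2⟩ | ⟨h1, h2⟩ | ⟨h1, h2⟩
      · exact hcb' (key i hie j h1 l h2 c b hcSj hcSi hbSl hbSi)
      · exact hca' (key j hje i h1 l h2 c a hcSi hcSj haSl haSj)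
      · exact hba (key l hle i h1 j h2 b a hbSi hbSl haSj haSl)
  · rintro (⟨h2, hnofac⟩ | ⟨hkc, i, hi, hsub⟩)
    · refine ⟨fun h => hnofac h.2, fun τ hτ => ?_⟩
      have hlt : τ.card < σ.card := Finset.card_lt_card hτ
      exact ⟨by omega, small τ (hτ.subset.trans hσ) (by omega)⟩
    · refine ⟨fun h => by omega, fun τ hτ => ?_⟩
      have hlt : τ.card < σ.card := Finset.card_lt_card hτ
      exact ⟨by omega, i, hi, hτ.subset.trans hsub⟩
end
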